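/- Let 0 < p, q, s, t < ∞. The space of multipliers from ℓ^{p,q} to ℓ^{s,t} equals ℓ^{s(p/s)', t(q/t)'}, with comparable norms: a double-indexed sequence {b_{j,l}} satisfies ‖{a_{j,l} b_{j,l}}‖_{ℓ^{s,t}} ≤ C ‖{a_{j,l}}‖_{ℓ^{p,q}} for all {a_{j,l}} ∈ ℓ^{p,q} if and only if {b_{j,l}} ∈ ℓ^{s(p/s)', t(q/t)'}, and the optimal C is comparable to ‖{b_{j,l}}‖_{ℓ^{s(p/s)', t(q/t)'}}. -/

import Mathlib

open scoped ENNReal NNReal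

/-- Mixed norm `ℓ^{P,Q}` (inner exponent `P` over `l`, outer exponent `Q` over `j`),
valued in `ℝ≥0∞`, with the usual convention that exponent `∞` means a supremum. -/
noncomputable def mixedNorm (P Q : ℝ≥0∞) (a : ℕ → ℕ → ℂ) : ℝ≥0∞ :=
  let inner : ℕ → ℝ≥0∞ := fun j =>
    if P = ⊤ then ⨆ l, (‖a j l‖₊ : ℝ≥0∞)
    else (∑' l, (‖a j l‖₊ : ℝ≥0∞) ^ P.toReal) ^ (1/P.toReal)
  if Q = ⊤ then ⨆ j, inner j
  else (∑' j, (inner j) ^ Q.toReal) ^ (1/Q.toReal)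

/-- For `0 < x`, the exponent `x·(y)'` where `(y)' = y/(y-1)` if `y > 1` and `∞` if `y ≤ 1`. -/
noncomputable def mulConj (x y : ℝ) : ℝ≥0∞ :=
  if y ≤ 1 then ⊤ else ENNReal.ofReal (x * (y/(y-1)))

namespace Luecking

/-- `ℓ^e` norm of an `ℝ≥0∞` sequence, for `0 < e < ∞`. -/
noncomputable def lpN (e : ℝ) (f : ℕ → ℝ≥0∞) : ℝ≥0∞ := (∑' l, f l ^ e) ^ (1/e)

/-- The multiplier norm from `ℓ^p` to `ℓ^s`: `ℓ^∞` if `p ≤ s`, else `ℓ^{s(p/s)'}`. -/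
noncomputable def dualN (s p : ℝ) (g : ℕ → ℝ≥0∞) : ℝ≥0∞ :=
  if p/s ≤ 1 then ⨆ l, g l else lpN (s*((p/s)/(p/s-1))) g

lemma lpN_mono {e : ℝ} (he : 0 ≤ e) {f g : ℕ → ℝ≥0∞} (h : ∀ l, f l ≤ g l) :
    lpN e f ≤ lpN e g := by
  refine ENNReal.rpow_le_rpow ?_ (by positivity)
  exact ENNReal.tsum_le_tsum fun l => ENNReal.rpow_le_rpow (h l) he

lemma iSup_rpow {ι : Sort*} (f : ι → ℝ≥0∞) {c : ℝ} (hc : 0 < c) :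
    (⨆ i, f i) ^ c = ⨆ i, (f i) ^ c := by
  apply le_antisymm
  · have h1 : (⨆ i, f i) ≤ (⨆ i, f i ^ c) ^ (1/c) := by
      refine iSup_le fun i => ?_
      have : f i = (f i ^ c) ^ (1/c) := by
        rw [← ENNReal.rpow_mul, mul_one_div_cancel hc.ne', ENNReal.rpow_one]
      rw [this]
      exact ENNReal.rpow_le_rpow (le_iSup (fun i => f i ^ c) i) (by positivity)
    calc (⨆ i, f i) ^ c ≤ ((⨆ i, f i ^ c) ^ (1/c)) ^ c :=
          ENNReal.rpow_le_rpow h1 hc.le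
      _ = ⨆ i, f i ^ c := by
          rw [← ENNReal.rpow_mul, one_div_mul_cancel hc.ne', ENNReal.rpow_one]
  · exact iSup_le fun i => ENNReal.rpow_le_rpow (le_iSup f i) hc.le

lemma lpN_smul {e : ℝ} (he : 0 < e) (c : ℝ≥0∞) (f : ℕ → ℝ≥0∞) :
    lpN e (fun l => c * f l) = c * lpN e f := by
  unfold lpN
  simp_rw [ENNReal.mul_rpow_of_nonneg _ _ he.le]
  rw [ENNReal.tsum_mul_left, ENNReal.mul_rpow_of_nonneg _ _ (by positivity : (0:ℝ) ≤ 1/e),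
    ← ENNReal.rpow_mul, mul_one_div_cancel he.ne', ENNReal.rpow_one]

lemma lpN_exp_mono {a c : ℝ} (ha : 0 < a) (hac : a ≤ c) (f : ℕ → ℝ≥0∞) :
    lpN c f ≤ lpN a f := by
  have hc : 0 < c := ha.trans_le hac
  set S := ∑' l, f l ^ a with hS
  have key : ∀ l, f l ≤ S ^ (1/a) := by
    intro l
    have h1 : f l = (f l ^ a) ^ (1/a) := by
      rw [← ENNReal.rpow_mul, mul_one_div_cancel ha.ne', ENNReal.rpow_one]
    rw [h1]
    exact ENNReal.rpow_le_rpow (ENNReal.le_tsum l) (by positivity)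
  have h2 : ∀ l, f l ^ c ≤ f l ^ a * (S ^ (1/a)) ^ (c - a) := by
    intro l
    have h3 : f l ^ c = f l ^ a * f l ^ (c - a) := by
      rw [← ENNReal.rpow_add_of_nonneg _ _ ha.le (by linarith)]
      ring_nf
    rw [h3]
    exact mul_le_mul_right (ENNReal.rpow_le_rpow (key l) (by linarith)) _
  have h4 : lpN c f ≤ (S * (S ^ (1/a)) ^ (c - a)) ^ (1/c) := by
    unfold lpN
    refine ENNReal.rpow_le_rpow ?_ (by positivity)
    calc ∑' l, f l ^ c ≤ ∑' l, f l ^ a * (S ^ (1/a)) ^ (c - a) :=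
          ENNReal.tsum_le_tsum h2
      _ = S * (S ^ (1/a)) ^ (c - a) := ENNReal.tsum_mul_right
  refine h4.trans_eq ?_
  have h5 : (S ^ (1/a)) ^ (c - a) = S ^ ((c - a)/a) := by
    rw [← ENNReal.rpow_mul]; ring_nf
  have h6 : S * S ^ ((c - a)/a) = S ^ (c/a) := by
    have h7 : c/a = 1 + (c - a)/a := by field_simp; ring
    rw [h7, ENNReal.rpow_add_of_nonneg _ _ zero_le_one (div_nonneg (by linarith) ha.le),
      ENNReal.rpow_one]
  rw [h5, h6, ← ENNReal.rpow_mul]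
  have : c/a * (1/c) = 1/a := by field_simp
  rw [this]
  rfl

/-- One-dimensional Hölder inequality in the form needed. -/
lemma holder1 {s p : ℝ} (hs : 0 < s) (hp : 0 < p) (f g : ℕ → ℝ≥0∞) :
    lpN s (fun l => f l * g l) ≤ dualN s p g * lpN p f := by
  unfold dualN
  by_cases h : p/s ≤ 1
  · rw [if_pos h]
    have hps : p ≤ s := (div_le_one hs).mp h
    calc lpN s (fun l => f l * g l) ≤ lpN s (fun l => (⨆ l', g l') * f l) := by
          refine lpN_mono hs.le fun l => ?_
          rw [mul_comm]
          exact mul_le_mul_left (le_iSup g l) _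
      _ = (⨆ l', g l') * lpN s f := lpN_smul hs _ _
      _ ≤ (⨆ l', g l') * lpN p f := mul_le_mul_right (lpN_exp_mono hp hps f) _
  · rw [if_neg h]
    push_neg at h
    set r := p/s with hr
    set r' := r/(r-1) with hr'
    have hr0 : 0 < r := by positivity
    have hr1' : 0 < r - 1 := by linarith
    have hr'0 : 0 < r' := div_pos hr0 hr1'
    have hconj : r.HolderConjugate r' := (Real.holderConjugate_iff_eq_conjExponent h).mpr hr'
    have hmeas : ∀ u : ℕ → ℝ≥0∞, AEMeasurable u (MeasureTheory.Measure.count) :=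
      fun u => (measurable_of_countable u).aemeasurable
    have H := ENNReal.lintegral_mul_le_Lp_mul_Lq (MeasureTheory.Measure.count (α := ℕ))
      hconj (hmeas (fun l => f l ^ s)) (hmeas (fun l => g l ^ s))
    simp only [Pi.mul_apply] at H
    rw [MeasureTheory.lintegral_count, MeasureTheory.lintegral_count,
      MeasureTheory.lintegral_count] at H
    have e1 : ∀ l, (f l ^ s) ^ r = f l ^ p := by
      intro l; rw [← ENNReal.rpow_mul]
      congr 1
      rw [hr]; field_simp
    have e2 : ∀ l, (g l ^ s) ^ r' = g l ^ (s * r') := by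
      intro l; rw [← ENNReal.rpow_mul]
    simp_rw [e1, e2] at H
    have h3 : lpN s (fun l => f l * g l) =
        (∑' l, f l ^ s * g l ^ s) ^ (1/s) := by
      unfold lpN
      congr 1
      exact tsum_congr fun l => ENNReal.mul_rpow_of_nonneg _ _ hs.le
    rw [h3]
    calc (∑' l, f l ^ s * g l ^ s) ^ (1/s)
        ≤ ((∑' l, f l ^ p) ^ (1/r) * (∑' l, g l ^ (s*r')) ^ (1/r')) ^ (1/s) :=
          ENNReal.rpow_le_rpow H (by positivity)
      _ = ((∑' l, f l ^ p) ^ (1/r)) ^ (1/s) * ((∑' l, g l ^ (s*r')) ^ (1/r')) ^ (1/s) :=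
          ENNReal.mul_rpow_of_nonneg _ _ (by positivity)
      _ = lpN (s*r') g * lpN p f := by
          rw [← ENNReal.rpow_mul, ← ENNReal.rpow_mul]
          have q1 : 1/r * (1/s) = 1/p := by rw [hr]; field_simp
          have q2 : 1/r' * (1/s) = 1/(s*r') := by
            rw [one_div_mul_one_div, one_div, one_div, mul_comm s r']
          rw [q1, q2]
          unfold lpN
          rw [mul_comm]


lemma lpN_single {e : ℝ} (he : 0 < e) (u : ℕ → ℝ≥0∞) (j : ℕ)
    (hu : ∀ i, i ≠ j → u i = 0) : lpN e u = u j := by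
  unfold lpN
  rw [tsum_eq_single j (fun i hi => by rw [hu i hi, ENNReal.zero_rpow_of_pos he]),
    ← ENNReal.rpow_mul, mul_one_div_cancel he.ne', ENNReal.rpow_one]

/-- Existence of near-extremal test sequences for the multiplier norm. -/
lemma witness {s p : ℝ} (hs : 0 < s) (hp : 0 < p) (g : ℕ → ℝ≥0∞) (hg : ∀ l, g l ≠ ⊤) :
    ∃ (F : ℕ → ℕ → ℝ≥0∞) (lam : ℕ → ℝ≥0∞),
      (∀ N l, F N l ≠ ⊤) ∧ (∀ N, lpN p (F N) ≤ 1) ∧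
      (∀ N, lam N ≤ lpN s (fun l => F N l * g l)) ∧ Monotone lam ∧
      (⨆ N, lam N) = dualN s p g := by
  unfold dualN
  by_cases h : p/s ≤ 1
  · rw [if_pos h]
    have hex : ∀ N : ℕ, ∃ l₀ ∈ Finset.range (N+1),
        (Finset.range (N+1)).sup g = g l₀ :=
      fun N => Finset.exists_mem_eq_sup _ (Finset.nonempty_range_iff.mpr (Nat.succ_ne_zero N)) g
    choose l₀ hl₀mem hl₀ using hex
    refine ⟨fun N l => if l = l₀ N then 1 else 0,
      fun N => (Finset.range (N+1)).sup g, ?_, ?_, ?_, ?_, ?_⟩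
    · intro N l; dsimp only; split <;> simp
    · intro N
      have h1 : lpN p (fun l => if l = l₀ N then 1 else 0) = 1 := by
        rw [lpN_single hp _ (l₀ N) (fun i hi => by simp [hi])]
        simp
      rw [h1]
    · intro N
      dsimp only
      have h1 : lpN s (fun l => (if l = l₀ N then 1 else 0) * g l) = g (l₀ N) := by
        rw [lpN_single hs _ (l₀ N) (fun i hi => by simp [hi])]
        simp
      rw [h1]
      exact (hl₀ N).le
    · intro N M hNM
      exact Finset.sup_mono (Finset.range_subset_range.mpr (by omega))
    · apply le_antisymm
      · exact iSup_le fun N => Finset.sup_le fun l _ => le_iSup g l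
      · exact iSup_le fun l => le_iSup_of_le l
          (Finset.le_sup (Finset.self_mem_range_succ l))
  · rw [if_neg h]
    push_neg at h
    have hsp : s < p := by
      by_contra h'
      exact absurd ((div_le_one hs).mpr (not_lt.mp h')) (not_le.mpr h)
    have hs0 : s ≠ 0 := hs.ne'
    have hp0 : p ≠ 0 := hp.ne'
    have hps0 : p - s ≠ 0 := sub_ne_zero.mpr hsp.ne'
    have hps1 : p/s - 1 ≠ 0 := by
      have : (1:ℝ) < p/s := h
      intro hz; rw [sub_eq_zero] at hz; rw [hz] at this; exact lt_irrefl _ this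
    set e := s*((p/s)/(p/s-1)) with he_def
    have he : e = s*p/(p-s) := by
      rw [he_def]; field_simp
    have he_pos : 0 < e := by
      rw [he]
      have : 0 < p - s := by linarith
      positivity
    set SN : ℕ → ℝ≥0∞ := fun N => ∑ l ∈ Finset.range N, g l ^ e with hSN
    have hSN_ne_top : ∀ N, SN N ≠ ⊤ := by
      intro N
      refine (ENNReal.sum_lt_top.mpr fun l _ => ?_).ne
      exact (ENNReal.rpow_ne_top_of_nonneg he_pos.le (hg l)).lt_top
    refine ⟨fun N l => if l < N then g l ^ (e/p) * (SN N) ^ (-(1/p)) else 0,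
      fun N => (SN N) ^ (1/e), ?_, ?_, ?_, ?_, ?_⟩
    · intro N l; dsimp only
      by_cases hl : l < N
      · rw [if_pos hl]
        rcases eq_or_ne (g l) 0 with h0 | h0
        · rw [h0, ENNReal.zero_rpow_of_pos (by positivity), zero_mul]
          exact ENNReal.zero_ne_top
        · have hSN0 : SN N ≠ 0 := by
            intro hz
            have h2 := Finset.sum_eq_zero_iff.mp hz l (Finset.mem_range.mpr hl)
            rcases ENNReal.rpow_eq_zero_iff.mp h2 with ⟨h1, _⟩ | ⟨_, h2'⟩
            · exact h0 h1
            · exact absurd h2' (lt_asymm he_pos)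
          refine ENNReal.mul_ne_top (ENNReal.rpow_ne_top_of_nonneg (by positivity) (hg l)) ?_
          rw [ENNReal.rpow_neg]
          refine ENNReal.inv_ne_top.mpr ?_
          simp only [ne_eq, ENNReal.rpow_eq_zero_iff, not_or, not_and]
          exact ⟨fun h1 => absurd h1 hSN0, fun h1 => absurd h1 (hSN_ne_top N)⟩
      · rw [if_neg hl]; exact ENNReal.zero_ne_top
    · intro N
      have hsum : (∑' l, (if l < N then g l ^ (e/p) * (SN N) ^ (-(1/p)) else 0) ^ p)
          = ∑ l ∈ Finset.range N, g l ^ e * (SN N) ^ (-(1:ℝ)) := by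
        rw [tsum_eq_sum (s := Finset.range N)
          (fun l hl => by
            rw [if_neg (by simpa using hl), ENNReal.zero_rpow_of_pos hp])]
        refine Finset.sum_congr rfl fun l hl => ?_
        rw [if_pos (Finset.mem_range.mp hl),
          ENNReal.mul_rpow_of_nonneg _ _ hp.le, ← ENNReal.rpow_mul, ← ENNReal.rpow_mul]
        have q1 : e/p*p = e := div_mul_cancel₀ _ hp0
        have q2 : -(1/p)*p = -(1:ℝ) := by field_simp
        rw [q1, q2]
      unfold lpN
      rw [hsum]
      rcases eq_or_ne (SN N) 0 with h0 | h0
      · have hz : ∀ l ∈ Finset.range N, g l ^ e * (SN N) ^ (-(1:ℝ)) = 0 := by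
          intro l hl
          rw [Finset.sum_eq_zero_iff.mp h0 l hl, zero_mul]
        rw [Finset.sum_eq_zero hz, ENNReal.zero_rpow_of_pos (by positivity)]
        exact zero_le_one
      · rw [← Finset.sum_mul, ENNReal.rpow_neg_one]
        have hshow : ((∑ i ∈ Finset.range N, g i ^ e) * (SN N)⁻¹) ^ (1/p)
            = (SN N * (SN N)⁻¹) ^ (1/p) := rfl
        rw [hshow, ENNReal.mul_inv_cancel h0 (hSN_ne_top N), ENNReal.one_rpow]
    · intro N
      dsimp only
      rcases eq_or_ne (SN N) 0 with h0 | h0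
      · rw [h0, ENNReal.zero_rpow_of_pos (by positivity)]
        exact zero_le'
      · have hsum : (∑' l, ((if l < N then g l ^ (e/p) * (SN N) ^ (-(1/p)) else 0) * g l) ^ s)
            = ∑ l ∈ Finset.range N, g l ^ e * (SN N) ^ (-(s/p)) := by
          rw [tsum_eq_sum (s := Finset.range N)
            (fun l hl => by
              rw [if_neg (by simpa using hl), zero_mul, ENNReal.zero_rpow_of_pos hs])]
          refine Finset.sum_congr rfl fun l hl => ?_
          rw [if_pos (Finset.mem_range.mp hl), mul_right_comm]
          nth_rewrite 2 [← ENNReal.rpow_one (g l)]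
          rw [← ENNReal.rpow_add_of_nonneg _ _ (by positivity) zero_le_one,
            ENNReal.mul_rpow_of_nonneg _ _ hs.le, ← ENNReal.rpow_mul, ← ENNReal.rpow_mul]
          have q1 : (e/p + 1) * s = e := by rw [he]; field_simp; ring
          have q2 : -(1/p)*s = -(s/p) := by field_simp
          rw [q1, q2]
        unfold lpN
        rw [hsum, ← Finset.sum_mul]
        have hshow : ((∑ i ∈ Finset.range N, g i ^ e) * SN N ^ (-(s/p))) ^ (1/s)
            = (SN N * SN N ^ (-(s/p))) ^ (1/s) := rfl
        rw [hshow]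
        have key : SN N * SN N ^ (-(s/p)) = SN N ^ (1 + -(s/p)) := by
          rw [ENNReal.rpow_add _ _ h0 (hSN_ne_top N), ENNReal.rpow_one]
        rw [key, ← ENNReal.rpow_mul]
        have hexp : (1 + -(s/p)) * (1/s) = 1/e := by
          rw [he]; field_simp; ring
        rw [hexp]
    · intro N M hNM
      refine ENNReal.rpow_le_rpow ?_ (by positivity)
      exact Finset.sum_le_sum_of_subset (Finset.range_subset_range.mpr hNM)
    · have h1 : lpN e g = (⨆ N, SN N) ^ (1/e) := by
        unfold lpN
        rw [ENNReal.tsum_eq_iSup_nat]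
      rw [h1, iSup_rpow SN (by positivity)]


lemma converse1 {s p : ℝ} (hs : 0 < s) (hp : 0 < p) (g : ℕ → ℝ≥0∞) (hg : ∀ l, g l ≠ ⊤)
    (C : ℝ≥0∞)
    (H : ∀ f : ℕ → ℝ≥0∞, (∀ l, f l ≠ ⊤) → lpN s (fun l => f l * g l) ≤ C * lpN p f) :
    dualN s p g ≤ C := by
  obtain ⟨F, lam, hFt, hF1, hFlam, _, hsup⟩ := witness hs hp g hg
  rw [← hsup]
  refine iSup_le fun N => ?_
  calc lam N ≤ lpN s (fun l => F N l * g l) := hFlam N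
    _ ≤ C * lpN p (F N) := H (F N) (hFt N)
    _ ≤ C * 1 := mul_le_mul_right (hF1 N) C
    _ = C := mul_one C

lemma dualN_le_of_monotone_sup {t q : ℝ} (ht : 0 < t) (hq : 0 < q)
    (h : ℕ → ℕ → ℝ≥0∞) (hmono : Monotone h) :
    dualN t q (fun j => ⨆ N, h N j) ≤ ⨆ N, dualN t q (h N) := by
  unfold dualN
  by_cases hc : q/t ≤ 1
  · simp only [if_pos hc]
    rw [iSup_comm]
  · simp only [if_neg hc]
    push_neg at hc
    set e := t*((q/t)/(q/t-1)) with he_def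
    have he_pos : 0 < e := by
      have h1 : (0:ℝ) < q/t - 1 := by linarith
      have h2 : (0:ℝ) < q/t := by positivity
      rw [he_def]; positivity
    unfold lpN
    have step1 : ∀ j, (⨆ N, h N j) ^ e = ⨆ N, (h N j) ^ e :=
      fun j => iSup_rpow _ he_pos
    simp_rw [step1]
    have step2 : (∑' j, ⨆ N, (h N j) ^ e) = ⨆ N, ∑' j, (h N j) ^ e := by
      have hm : Monotone fun N => fun j => (h N j) ^ e := by
        intro N M hNM j
        exact ENNReal.rpow_le_rpow (hmono hNM j) he_pos.le
      calc (∑' j, ⨆ N, (h N j) ^ e)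
          = ∫⁻ j, ⨆ N, (h N j) ^ e ∂(MeasureTheory.Measure.count) :=
            (MeasureTheory.lintegral_count _).symm
        _ = ⨆ N, ∫⁻ j, (h N j) ^ e ∂(MeasureTheory.Measure.count) :=
            MeasureTheory.lintegral_iSup (fun N => measurable_of_countable _) hm
        _ = ⨆ N, ∑' j, (h N j) ^ e :=
            iSup_congr fun N => MeasureTheory.lintegral_count _
    rw [step2, iSup_rpow _ (by positivity : (0:ℝ) < 1/e)]

lemma mixedNorm_eq {P Q : ℝ} (hP : 0 < P) (hQ : 0 < Q) (a : ℕ → ℕ → ℂ) :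
    mixedNorm (ENNReal.ofReal P) (ENNReal.ofReal Q) a
      = lpN Q (fun j => lpN P (fun l => (‖a j l‖₊ : ℝ≥0∞))) := by
  unfold mixedNorm lpN
  simp [ENNReal.ofReal_ne_top, ENNReal.toReal_ofReal hP.le, ENNReal.toReal_ofReal hQ.le]

lemma mixedNorm_dual_eq {p q s t : ℝ} (hp : 0 < p) (hq : 0 < q) (hs : 0 < s) (ht : 0 < t)
    (b : ℕ → ℕ → ℂ) :
    mixedNorm (mulConj s (p/s)) (mulConj t (q/t)) b
      = dualN t q (fun j => dualN s p (fun l => (‖b j l‖₊ : ℝ≥0∞))) := by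
  have hnn : ∀ (x y : ℝ), 0 < x → ¬ y ≤ 1 → 0 ≤ x * (y/(y-1)) := by
    intro x y hx hy
    push_neg at hy
    have : 0 < y - 1 := by linarith
    positivity
  unfold mixedNorm mulConj dualN lpN
  by_cases h1 : p/s ≤ 1 <;> by_cases h2 : q/t ≤ 1
  · simp [h1, h2]
  · simp [h1, h2, ENNReal.ofReal_ne_top, ENNReal.toReal_ofReal (hnn t (q/t) ht h2)]
  · simp [h1, h2, ENNReal.ofReal_ne_top, ENNReal.toReal_ofReal (hnn s (p/s) hs h1)]
  · simp [h1, h2, ENNReal.ofReal_ne_top, ENNReal.toReal_ofReal (hnn s (p/s) hs h1),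
      ENNReal.toReal_ofReal (hnn t (q/t) ht h2)]


lemma key_coe (x : ℝ≥0∞) (hx : x ≠ ⊤) : (‖((x.toReal : ℝ) : ℂ)‖₊ : ℝ≥0∞) = x := by
  rw [Complex.nnnorm_real, ← enorm_eq_nnnorm, Real.enorm_eq_ofReal ENNReal.toReal_nonneg,
    ENNReal.ofReal_toReal hx]

lemma lpN_zero {e : ℝ} (he : 0 < e) : lpN e (fun _ => (0:ℝ≥0∞)) = 0 := by
  unfold lpN
  rw [show (fun l : ℕ => (0:ℝ≥0∞) ^ e) = fun _ => 0 from
      funext fun _ => ENNReal.zero_rpow_of_pos he,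
    tsum_zero, ENNReal.zero_rpow_of_pos (one_div_pos.mpr he)]

end Luecking


open Luecking

/-- Luecking's multiplier lemma: for `0 < p,q,s,t < ∞`,
`[ℓ^{p,q}, ℓ^{s,t}] = ℓ^{s(p/s)', t(q/t)'}` with comparable norms. -/
theorem statement11 (p q s t : ℝ) (hp : 0 < p) (hq : 0 < q) (hs : 0 < s) (ht : 0 < t) :
    ∃ c₁ c₂ : ℝ≥0∞, 0 < c₁ ∧ c₁ ≠ ⊤ ∧ 0 < c₂ ∧ c₂ ≠ ⊤ ∧
      ∀ b : ℕ → ℕ → ℂ,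
        (∀ a : ℕ → ℕ → ℂ,
          mixedNorm (ENNReal.ofReal s) (ENNReal.ofReal t) (fun j l => a j l * b j l)
            ≤ c₂ * mixedNorm (mulConj s (p/s)) (mulConj t (q/t)) b
                * mixedNorm (ENNReal.ofReal p) (ENNReal.ofReal q) a) ∧
        (∀ C : ℝ≥0∞,
          (∀ a : ℕ → ℕ → ℂ,
            mixedNorm (ENNReal.ofReal s) (ENNReal.ofReal t) (fun j l => a j l * b j l)
              ≤ C * mixedNorm (ENNReal.ofReal p) (ENNReal.ofReal q) a) →
          mixedNorm (mulConj s (p/s)) (mulConj t (q/t)) b ≤ c₁ * C) := by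
  classical
  refine ⟨1, 1, zero_lt_one, ENNReal.one_ne_top, zero_lt_one, ENNReal.one_ne_top, fun b => ?_⟩
  constructor
  · intro a
    rw [mixedNorm_eq hs ht, mixedNorm_eq hp hq, mixedNorm_dual_eq hp hq hs ht, one_mul]
    have hinner : ∀ j, lpN s (fun l => (‖a j l * b j l‖₊ : ℝ≥0∞)) ≤
        lpN p (fun l => (‖a j l‖₊ : ℝ≥0∞)) * dualN s p (fun l => (‖b j l‖₊ : ℝ≥0∞)) := by
      intro j
      have h1 : (fun l => ((‖a j l * b j l‖₊ : ℝ≥0∞)))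
          = fun l => (‖a j l‖₊ : ℝ≥0∞) * (‖b j l‖₊ : ℝ≥0∞) := by
        funext l; rw [nnnorm_mul, ENNReal.coe_mul]
      rw [h1, mul_comm]
      exact holder1 hs hp _ _
    calc lpN t (fun j => lpN s (fun l => (‖a j l * b j l‖₊ : ℝ≥0∞)))
        ≤ lpN t (fun j => lpN p (fun l => (‖a j l‖₊ : ℝ≥0∞))
            * dualN s p (fun l => (‖b j l‖₊ : ℝ≥0∞))) := lpN_mono ht.le hinner
      _ ≤ dualN t q (fun j => dualN s p (fun l => (‖b j l‖₊ : ℝ≥0∞)))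
            * lpN q (fun j => lpN p (fun l => (‖a j l‖₊ : ℝ≥0∞))) := holder1 ht hq _ _
  · intro C hC
    rw [mixedNorm_dual_eq hp hq hs ht, one_mul]
    have HE : ∀ f : ℕ → ℕ → ℝ≥0∞, (∀ j l, f j l ≠ ⊤) →
        lpN t (fun j => lpN s (fun l => f j l * (‖b j l‖₊ : ℝ≥0∞)))
          ≤ C * lpN q (fun j => lpN p (f j)) := by
      intro f hf
      have h0 := hC (fun j l => ((f j l).toReal : ℂ))
      rw [mixedNorm_eq hs ht, mixedNorm_eq hp hq] at h0
      have e1 : (fun j => lpN s (fun l =>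
            (‖(fun j l => ((f j l).toReal : ℂ)) j l * b j l‖₊ : ℝ≥0∞)))
          = fun j => lpN s (fun l => f j l * (‖b j l‖₊ : ℝ≥0∞)) := by
        funext j; congr 1; funext l
        rw [nnnorm_mul, ENNReal.coe_mul]
        congr 1
        exact key_coe _ (hf j l)
      have e2 : (fun j => lpN p (fun l =>
            (‖(fun j l => ((f j l).toReal : ℂ)) j l‖₊ : ℝ≥0∞)))
          = fun j => lpN p (f j) := by
        funext j; congr 1; funext l
        exact key_coe _ (hf j l)
      rw [e1, e2] at h0
      exact h0
    have hrow : ∀ j, dualN s p (fun l => (‖b j l‖₊ : ℝ≥0∞)) ≤ C := by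
      intro j
      refine converse1 hs hp _ (fun l => ENNReal.coe_ne_top) C ?_
      intro f hf
      have hf2 : ∀ j' l, (if j' = j then f l else 0) ≠ (⊤ : ℝ≥0∞) := by
        intro j' l; split
        · exact hf l
        · exact ENNReal.zero_ne_top
      have H2 := HE (fun j' l => if j' = j then f l else 0) hf2
      have e3 : lpN t (fun j' => lpN s (fun l =>
            (if j' = j then f l else 0) * (‖b j' l‖₊ : ℝ≥0∞)))
          = lpN s (fun l => f l * (‖b j l‖₊ : ℝ≥0∞)) := by
        rw [lpN_single ht _ j (fun i hi => ?_)]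
        · congr 1; funext l; rw [if_pos rfl]
        · have : (fun l => (if i = j then f l else 0) * (‖b i l‖₊ : ℝ≥0∞))
              = fun _ => (0:ℝ≥0∞) := by
            funext l; rw [if_neg hi, zero_mul]
          rw [this, lpN_zero hs]
      have e4 : lpN q (fun j' => lpN p (fun l => if j' = j then f l else 0))
          = lpN p f := by
        rw [lpN_single hq _ j (fun i hi => ?_)]
        · rw [show (fun l => if j = j then f l else 0) = f by funext l; rw [if_pos rfl]]
        · have : (fun l => if i = j then f l else 0) = fun _ => (0:ℝ≥0∞) := by
            funext l; rw [if_neg hi]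
          rw [this, lpN_zero hp]
      rw [e3, e4] at H2
      exact H2
    rcases eq_or_ne C ⊤ with rfl | hCtop
    · exact le_top
    · have hMne : ∀ j, dualN s p (fun l => (‖b j l‖₊ : ℝ≥0∞)) ≠ ⊤ :=
        fun j => ne_top_of_le_ne_top hCtop (hrow j)
      choose F lam hFt hF1 hFlam hmono hsup using
        fun j => witness hs hp (fun l => (‖b j l‖₊ : ℝ≥0∞)) (fun l => ENNReal.coe_ne_top)
      have step3 : ∀ N, dualN t q (fun j => lam j N) ≤ C := by
        intro N
        refine converse1 ht hq _ (fun j => ?_) C ?_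
        · refine ne_top_of_le_ne_top (hMne j) ?_
          exact (le_iSup (lam j) N).trans_eq (hsup j)
        · intro c hc'
          have hf : ∀ j l, c j * F j N l ≠ ⊤ :=
            fun j l => ENNReal.mul_ne_top (hc' j) (hFt j N l)
          have H3 := HE (fun j l => c j * F j N l) hf
          have lb : lpN t (fun j => c j * lam j N)
              ≤ lpN t (fun j => lpN s (fun l => (c j * F j N l) * (‖b j l‖₊ : ℝ≥0∞))) := by
            refine lpN_mono ht.le fun j => ?_
            have e5 : (fun l => (c j * F j N l) * (‖b j l‖₊ : ℝ≥0∞))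
                = fun l => c j * (F j N l * (‖b j l‖₊ : ℝ≥0∞)) := by
              funext l; rw [mul_assoc]
            rw [e5, lpN_smul hs]
            exact mul_le_mul_right (hFlam j N) _
          have ub : lpN q (fun j => lpN p (fun l => c j * F j N l)) ≤ lpN q c := by
            refine lpN_mono hq.le fun j => ?_
            rw [lpN_smul hp]
            calc c j * lpN p (F j N) ≤ c j * 1 := mul_le_mul_right (hF1 j N) _
              _ = c j := mul_one _
          exact lb.trans (H3.trans (mul_le_mul_right ub C))
      have hfin : (fun j => dualN s p (fun l => (‖b j l‖₊ : ℝ≥0∞)))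
          = fun j => ⨆ N, lam j N := by
        funext j; exact (hsup j).symm
      rw [hfin]
      have hmono2 : Monotone (fun N => fun j => lam j N) :=
        fun N M hNM j => hmono j hNM
      calc dualN t q (fun j => ⨆ N, lam j N)
          ≤ ⨆ N, dualN t q (fun j => lam j N) :=
            dualN_le_of_monotone_sup ht hq _ hmono2
        _ ≤ C := iSup_le step3
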